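/- Let n ≥ 1, let S, T ∈ ℂ^{n×n} with S invertible, let b, d, c ∈ ℂⁿ with c^H (S⁻¹ b) ≠ 0, and set q₀ := S⁻¹ b and α₀ := 1/(c^H q₀). Let J̃ ∈ ℂ^{(n+1)×(n+1)} be the block matrix [[S, b],[c^H, 0]] and J the block matrix [[T, d],[c^H, 0]]. Then J̃ is invertible and I − J̃⁻¹ J equals the block matrix A₁ = [[(I − α₀ q₀ c^H) S⁻¹ (S − T), (I − α₀ q₀ c^H) S⁻¹ (b − d)],[α₀ c^H S⁻¹ (S − T), α₀ c^H S⁻¹ (b − d)]]. -/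
import Mathlib

open Matrix

/-- A column vector as an `n × 1` matrix. -/
def colVec {n : ℕ} (v : Fin n → ℂ) : Matrix (Fin n) Unit ℂ :=
  Matrix.of fun i _ => v i

/-- A row vector as a `1 × n` matrix. -/
def rowVec {n : ℕ} (v : Fin n → ℂ) : Matrix Unit (Fin n) ℂ :=
  Matrix.of fun _ j => v j

/-- A scalar as a `1 × 1` matrix. -/
def scalarBlock (s : ℂ) : Matrix Unit Unit ℂ :=
  Matrix.of fun _ _ => s

namespace QN1Aux

variable {n : ℕ}

lemma mul_colVec (M : Matrix (Fin n) (Fin n) ℂ) (v : Fin n → ℂ) :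
    M * colVec v = colVec (M *ᵥ v) := by
  ext i j; simp [colVec, Matrix.mul_apply, Matrix.mulVec, dotProduct]

lemma rowVec_mul (w : Fin n → ℂ) (M : Matrix (Fin n) (Fin n) ℂ) :
    rowVec w * M = rowVec (w ᵥ* M) := by
  ext i j; simp [rowVec, Matrix.mul_apply, Matrix.vecMul, dotProduct]

lemma colVec_mul_rowVec (v w : Fin n → ℂ) :
    colVec v * rowVec w = vecMulVec v w := by
  ext i j; simp [colVec, rowVec, Matrix.mul_apply, vecMulVec_apply]

lemma rowVec_mul_colVec (w v : Fin n → ℂ) :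
    rowVec w * colVec v = scalarBlock (w ⬝ᵥ v) := by
  ext i j; simp [colVec, rowVec, scalarBlock, Matrix.mul_apply, dotProduct]

lemma colVec_mul_scalarBlock (v : Fin n → ℂ) (s : ℂ) :
    colVec v * scalarBlock s = colVec (s • v) := by
  ext i j; simp [colVec, scalarBlock, Matrix.mul_apply, mul_comm]

lemma scalarBlock_mul_rowVec (s : ℂ) (w : Fin n → ℂ) :
    scalarBlock s * rowVec w = rowVec (s • w) := by
  ext i j; simp [rowVec, scalarBlock, Matrix.mul_apply]

lemma scalarBlock_one : scalarBlock 1 = (1 : Matrix Unit Unit ℂ) := by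
  ext i j; simp [scalarBlock, Matrix.one_apply]

lemma colVec_zero : colVec (0 : Fin n → ℂ) = 0 := by ext i j; simp [colVec]

lemma rowVec_zero : rowVec (0 : Fin n → ℂ) = 0 := by ext i j; simp [rowVec]

lemma colVec_add (v w : Fin n → ℂ) : colVec (v + w) = colVec v + colVec w := by
  ext i j; simp [colVec]

lemma rowVec_add (v w : Fin n → ℂ) : rowVec (v + w) = rowVec v + rowVec w := by
  ext i j; simp [rowVec]

lemma colVec_sub (v w : Fin n → ℂ) : colVec (v - w) = colVec v - colVec w := by
  ext i j; simp [colVec]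

lemma rowVec_neg (v : Fin n → ℂ) : rowVec (-v) = -rowVec v := by
  ext i j; simp [rowVec]

lemma rowVec_sub (v w : Fin n → ℂ) : rowVec (v - w) = rowVec v - rowVec w := by
  ext i j; simp [rowVec]

lemma mul_vecMulVec (M : Matrix (Fin n) (Fin n) ℂ) (v w : Fin n → ℂ) :
    M * vecMulVec v w = vecMulVec (M *ᵥ v) w := by
  ext i j
  simp [Matrix.mul_apply, vecMulVec_apply, Matrix.mulVec, dotProduct,
    Finset.sum_mul, mul_assoc]

lemma vecMulVec_mul (v w : Fin n → ℂ) (M : Matrix (Fin n) (Fin n) ℂ) :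
    vecMulVec v w * M = vecMulVec v (w ᵥ* M) := by
  ext i j
  simp [Matrix.mul_apply, vecMulVec_apply, Matrix.vecMul, dotProduct,
    Finset.mul_sum, mul_assoc]

lemma vecMulVec_mulVec (v w u : Fin n → ℂ) :
    vecMulVec v w *ᵥ u = (w ⬝ᵥ u) • v := by
  ext i
  simp only [Matrix.mulVec, vecMulVec_apply, dotProduct, Pi.smul_apply,
    smul_eq_mul, Finset.sum_mul]
  exact Finset.sum_congr rfl fun k _ => by ring

lemma vecMul_vecMulVec (u v w : Fin n → ℂ) :
    u ᵥ* vecMulVec v w = (u ⬝ᵥ v) • w := by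
  ext j
  simp [Matrix.vecMul, vecMulVec_apply, dotProduct, Finset.sum_mul, mul_assoc]

lemma smul_vecMulVec (a : ℂ) (v w : Fin n → ℂ) :
    vecMulVec (a • v) w = a • vecMulVec v w := by
  ext i j; simp [vecMulVec_apply, mul_assoc]

lemma vecMul_smul_mat (a : ℂ) (w : Fin n → ℂ) (M : Matrix (Fin n) (Fin n) ℂ) :
    w ᵥ* (a • M) = a • (w ᵥ* M) := by
  ext j; simp [Matrix.vecMul, dotProduct, Finset.mul_sum]; ring_nf
  exact Finset.sum_congr rfl fun k _ => by ring

lemma vecMulVec_smul (a : ℂ) (v w : Fin n → ℂ) :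
    vecMulVec v (a • w) = a • vecMulVec v w := by
  ext i j; simp [vecMulVec_apply]; ring

end QN1Aux

open QN1Aux

theorem qn1_iteration_matrix (n : ℕ) (hn : 1 ≤ n)
    (S T : Matrix (Fin n) (Fin n) ℂ) (hS : IsUnit S)
    (b d c : Fin n → ℂ) (hc : star c ⬝ᵥ (S⁻¹ *ᵥ b) ≠ 0)
    (q0 : Fin n → ℂ) (hq0 : q0 = S⁻¹ *ᵥ b)
    (α0 : ℂ) (hα0 : α0 = 1 / (star c ⬝ᵥ q0))
    (Jt J A1 : Matrix (Fin n ⊕ Unit) (Fin n ⊕ Unit) ℂ)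
    (hJt : Jt = Matrix.fromBlocks S (colVec b) (rowVec (star c)) 0)
    (hJ : J = Matrix.fromBlocks T (colVec d) (rowVec (star c)) 0)
    (hA1 : A1 = Matrix.fromBlocks
      ((1 - α0 • vecMulVec q0 (star c)) * S⁻¹ * (S - T))
      (colVec (((1 - α0 • vecMulVec q0 (star c)) * S⁻¹) *ᵥ (b - d)))
      (rowVec (α0 • (star c ᵥ* (S⁻¹ * (S - T)))))
      (scalarBlock (α0 * (star c ⬝ᵥ (S⁻¹ *ᵥ (b - d)))))) :
    IsUnit Jt ∧ 1 - Jt⁻¹ * J = A1 := by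
  have hdet : IsUnit S.det := (Matrix.isUnit_iff_isUnit_det S).mp hS
  have hSiS : S⁻¹ * S = 1 := Matrix.nonsing_inv_mul S hdet
  have hSSi : S * S⁻¹ = 1 := Matrix.mul_nonsing_inv S hdet
  set cH := star c with hcH
  set s : ℂ := cH ⬝ᵥ q0 with hs
  have hs0 : s ≠ 0 := by rw [hs, hq0]; exact hc
  have hαs : α0 * s = 1 := by rw [hα0]; field_simp
  have hSq : S *ᵥ q0 = b := by
    rw [hq0, Matrix.mulVec_mulVec, hSSi, Matrix.one_mulVec]
  set P := vecMulVec q0 cH with hP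
  set K : Matrix (Fin n ⊕ Unit) (Fin n ⊕ Unit) ℂ :=
    Matrix.fromBlocks (S⁻¹ - α0 • (P * S⁻¹)) (colVec (α0 • q0))
      (rowVec (α0 • (cH ᵥ* S⁻¹))) (scalarBlock (-α0)) with hK
  have hJtK : Jt * K = 1 := by
    rw [hJt, hK, Matrix.fromBlocks_multiply, ← Matrix.fromBlocks_one,
      Matrix.fromBlocks_inj]
    refine ⟨?_, ?_, ?_, ?_⟩
    · rw [Matrix.mul_sub, hSSi, Matrix.mul_smul, ← Matrix.mul_assoc, hP,
        mul_vecMulVec, hSq, vecMulVec_mul, colVec_mul_rowVec, vecMulVec_smul]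
      abel
    · rw [mul_colVec, Matrix.mulVec_smul, hSq, colVec_mul_scalarBlock,
        ← colVec_add, ← colVec_zero]
      congr 1
      simp
    · rw [Matrix.zero_mul, add_zero, rowVec_mul, Matrix.vecMul_sub,
        vecMul_smul_mat, hP, ← Matrix.vecMul_vecMul, vecMul_vecMulVec,
        Matrix.smul_vecMul, smul_smul, (show α0 * (cH ⬝ᵥ q0) = 1 from hαs),
        one_smul, sub_self, rowVec_zero]
    · rw [rowVec_mul_colVec, Matrix.zero_mul, add_zero, dotProduct_smul,
        smul_eq_mul, (show α0 * (cH ⬝ᵥ q0) = 1 from hαs), scalarBlock_one]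
  have hKJt : K * Jt = 1 := mul_eq_one_comm.mp hJtK
  have hUnit : IsUnit Jt := ⟨⟨Jt, K, hJtK, hKJt⟩, rfl⟩
  refine ⟨hUnit, ?_⟩
  have hInv : Jt⁻¹ = K := Matrix.inv_eq_right_inv hJtK
  have hK11 : (1 - α0 • P) * S⁻¹ = S⁻¹ - α0 • (P * S⁻¹) := by
    rw [Matrix.sub_mul, Matrix.one_mul, Matrix.smul_mul]
  have hK11S : (S⁻¹ - α0 • (P * S⁻¹)) * S = 1 - α0 • P := by
    rw [Matrix.sub_mul, hSiS, Matrix.smul_mul, Matrix.mul_assoc, hSiS,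
      Matrix.mul_one]
  have hK11b : (S⁻¹ - α0 • (P * S⁻¹)) *ᵥ b = 0 := by
    rw [Matrix.sub_mulVec, Matrix.smul_mulVec, ← Matrix.mulVec_mulVec,
      ← hq0, hP, vecMulVec_mulVec, smul_smul,
      (show α0 * (cH ⬝ᵥ q0) = 1 from hαs)]
    simp
  rw [hInv, hJ, hA1, hK, Matrix.fromBlocks_multiply, ← Matrix.fromBlocks_one,
    sub_eq_add_neg, Matrix.fromBlocks_neg, Matrix.fromBlocks_add,
    Matrix.fromBlocks_inj]
  refine ⟨?_, ?_, ?_, ?_⟩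
  · rw [hK11, Matrix.mul_sub, hK11S, colVec_mul_rowVec, smul_vecMulVec, ← hP]
    abel
  · rw [Matrix.mul_zero, add_zero, mul_colVec, hK11, Matrix.mulVec_sub,
      hK11b, zero_sub, zero_add]
    ext i j
    simp [colVec]
  · -- bottom-left
    have hv : cH ᵥ* (S⁻¹ * (S - T)) = cH - (cH ᵥ* S⁻¹) ᵥ* T := by
      rw [Matrix.mul_sub, hSiS, Matrix.vecMul_sub, Matrix.vecMul_one,
        ← Matrix.vecMul_vecMul]
    rw [rowVec_mul, Matrix.smul_vecMul, scalarBlock_mul_rowVec, ← rowVec_add,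
      hv, zero_add, ← rowVec_neg]
    congr 1
    ext j
    simp [smul_sub]
    ring
  · -- bottom-right
    rw [rowVec_mul_colVec, Matrix.mul_zero, add_zero]
    have : (α0 • (cH ᵥ* S⁻¹)) ⬝ᵥ d = α0 * (cH ⬝ᵥ (S⁻¹ *ᵥ d)) := by
      rw [smul_dotProduct, smul_eq_mul, dotProduct_mulVec]
    rw [this]
    have h2 : α0 * (cH ⬝ᵥ S⁻¹ *ᵥ (b - d)) = 1 - α0 * (cH ⬝ᵥ (S⁻¹ *ᵥ d)) := by
      rw [Matrix.mulVec_sub, dotProduct_sub, mul_sub, ← hq0,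
        (show α0 * (cH ⬝ᵥ q0) = 1 from hαs)]
    rw [h2]
    ext i j
    simp [scalarBlock, Matrix.one_apply, sub_eq_add_neg]
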